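/- Let s, u be natural numbers with 1 ≤ u ≤ s, let c = ⌊s/u⌋ (natural-number division), and let a be a positive real number. Then the sequence N ↦ ( ((s − c·(u−1)) : ℝ) · a · (clog₂ N : ℝ) ) / logb 2 (binom(N, c)) tends to a · (1 + ((s mod u : ℝ)) / ((s div u : ℝ))) as N → ∞ along the natural numbers. (Limit of the ratio between the achievable communication overhead κ_achieve = (s − c̄(u−1))·a·⌈log₂ N⌉ with a = 1 + ⌈log₂|A|⌉ and c̄ = c = ⌊s/u⌋, and the lower bound κ_bound = log₂ binom(N, c), as the number of samples per group N = p/m grows; equation (10) of the paper.) -/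

import Mathlib

open Filter Real

/-- Limit of the ratio between the achievable communication overhead and the
lower bound as the number of samples per group grows (equation (10) of the
paper). -/
theorem communication_ratio_limit
    (s u : ℕ) (hu : 1 ≤ u) (hus : u ≤ s) (a : ℝ) (ha : 0 < a) :
    Filter.Tendsto
      (fun N : ℕ =>
        (((s : ℝ) - ((s / u : ℕ) : ℝ) * ((u : ℝ) - 1)) * a * (Nat.clog 2 N : ℝ))
          / Real.logb 2 (N.choose (s / u)))
      Filter.atTop
      (nhds (a * (1 + ((s % u : ℕ) : ℝ) / ((s / u : ℕ) : ℝ)))) := by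
  set c := s / u with hcdef
  have hc1 : 1 ≤ c := (Nat.one_le_div_iff hu).mpr hus
  have hcR : (0:ℝ) < (c:ℝ) := by exact_mod_cast hc1
  set D : ℝ := 1 + Real.logb 2 (Nat.factorial c) / c with hD
  -- x N := logb 2 N tends to infinity
  have hx : Tendsto (fun N : ℕ => Real.logb 2 (N:ℝ)) atTop atTop :=
    (Real.tendsto_logb_atTop one_lt_two).comp tendsto_natCast_atTop_atTop
  -- the upper-bound function tends to 1/c
  have Hup : Tendsto (fun N : ℕ =>
      (Real.logb 2 (N:ℝ) + 1) / ((c:ℝ) * (Real.logb 2 (N:ℝ) - D))) atTop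
      (nhds (1/(c:ℝ))) := by
    have H : Tendsto (fun t : ℝ => (t + 1) / ((c:ℝ) * (t - D))) atTop
        (nhds (1/(c:ℝ))) := by
      have h0 : Tendsto (fun t : ℝ => t⁻¹) atTop (nhds 0) := tendsto_inv_atTop_zero
      have hnum : Tendsto (fun t : ℝ => 1 + t⁻¹) atTop (nhds (1 + 0)) :=
        tendsto_const_nhds.add h0
      have hden : Tendsto (fun t : ℝ => (c:ℝ) * (1 - D * t⁻¹)) atTop
          (nhds ((c:ℝ) * (1 - D * 0))) :=
        tendsto_const_nhds.mul (tendsto_const_nhds.sub (h0.const_mul D))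
      have hdiv := hnum.div hden (by
        simp only [mul_zero, sub_zero, mul_one]
        exact hcR.ne' <;> skip)
      have hdiv' : Tendsto (fun t : ℝ => (1 + t⁻¹) / ((c:ℝ) * (1 - D * t⁻¹))) atTop
          (nhds (1/(c:ℝ))) := by
        simpa [Pi.div_def] using hdiv
      refine hdiv'.congr' ?_
      filter_upwards [eventually_gt_atTop (max 0 D)] with t ht
      have ht0 : (0:ℝ) < t := lt_of_le_of_lt (le_max_left _ _) ht
      have htD : t - D ≠ 0 := sub_ne_zero.mpr (ne_of_gt (lt_of_le_of_lt (le_max_right _ _) ht))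
      field_simp
    exact H.comp hx
  -- the key limit : clog / logb choose → 1/c
  have key : Tendsto (fun N : ℕ =>
      (Nat.clog 2 N : ℝ) / Real.logb 2 (N.choose c)) atTop (nhds (1/(c:ℝ))) := by
    refine tendsto_of_tendsto_of_tendsto_of_le_of_le' tendsto_const_nhds Hup ?_ ?_
    · -- lower bound : 1/c ≤ f N eventually
      filter_upwards [eventually_ge_atTop (2*c + 2),
        hx.eventually (eventually_gt_atTop D),
        hx.eventually (eventually_gt_atTop (0:ℝ))] with N hN hxD hx0
      set x := Real.logb 2 (N:ℝ) with hxdef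
      have hN2 : 2 ≤ N := by omega
      have hNR : (0:ℝ) < N := by positivity
      -- logb 2 N ≤ clog 2 N
      have f1 : x ≤ (Nat.clog 2 N : ℝ) := by
        have h := Nat.le_pow_clog one_lt_two N
        have h' : (N:ℝ) ≤ (2:ℝ) ^ Nat.clog 2 N := by exact_mod_cast h
        calc x ≤ Real.logb 2 ((2:ℝ) ^ Nat.clog 2 N) :=
              Real.logb_le_logb_of_le one_lt_two hNR h'
          _ = (Nat.clog 2 N : ℝ) := by
              rw [Real.logb_pow, Real.logb_self_eq_one one_lt_two]; ring
      -- logb 2 choose ≤ c * x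
      have hchoosepos : (0:ℝ) < (N.choose c : ℝ) := by
        exact_mod_cast Nat.choose_pos (by omega : c ≤ N)
      have f3 : Real.logb 2 (N.choose c) ≤ (c:ℝ) * x := by
        have h : (N.choose c : ℝ) ≤ (N:ℝ) ^ c := by exact_mod_cast Nat.choose_le_pow N c
        calc Real.logb 2 (N.choose c) ≤ Real.logb 2 ((N:ℝ) ^ c) :=
              Real.logb_le_logb_of_le one_lt_two hchoosepos h
          _ = (c:ℝ) * x := by rw [Real.logb_pow]
      -- logb 2 choose ≥ c * (x - D) > 0
      have f4 : (c:ℝ) * (x - D) ≤ Real.logb 2 (N.choose c) := by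
        have hnat : (N + 1 - c)^c ≤ Nat.factorial c * N.choose c := by
          rw [← Nat.descFactorial_eq_factorial_mul_choose]
          exact Nat.pow_sub_le_descFactorial N c
        have hcast : (((N + 1 - c : ℕ)):ℝ) = (N:ℝ) + 1 - c := by
          have : c ≤ N + 1 := by omega
          push_cast [Nat.cast_sub this]; ring
        have hhalf : (N:ℝ)/2 ≤ ((N + 1 - c : ℕ) : ℝ) := by
          rw [hcast]
          have : (2*c + 2 : ℝ) ≤ (N:ℝ) := by exact_mod_cast hN
          linarith
        have hhalfpos : (0:ℝ) < (N:ℝ)/2 := by positivity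
        have hsubpos : (0:ℝ) < ((N + 1 - c : ℕ) : ℝ) := lt_of_lt_of_le hhalfpos hhalf
        have hlog1 : x - 1 ≤ Real.logb 2 ((N + 1 - c : ℕ) : ℝ) := by
          have h2 : Real.logb 2 ((N:ℝ)/2) = x - 1 := by
            rw [Real.logb_div hNR.ne' (by norm_num),
              Real.logb_self_eq_one one_lt_two]
          rw [← h2]
          exact Real.logb_le_logb_of_le one_lt_two hhalfpos hhalf
        have hlog2 : (c:ℝ) * Real.logb 2 ((N + 1 - c : ℕ) : ℝ) ≤
            Real.logb 2 (Nat.factorial c) + Real.logb 2 (N.choose c) := by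
          have hle : (((N + 1 - c : ℕ)):ℝ) ^ c ≤ (Nat.factorial c : ℝ) * (N.choose c : ℝ) := by
            exact_mod_cast hnat
          have hppos : (0:ℝ) < (((N + 1 - c : ℕ)):ℝ) ^ c := by positivity
          calc (c:ℝ) * Real.logb 2 ((N + 1 - c : ℕ) : ℝ)
              = Real.logb 2 ((((N + 1 - c : ℕ)):ℝ) ^ c) := by rw [Real.logb_pow]
            _ ≤ Real.logb 2 ((Nat.factorial c : ℝ) * (N.choose c : ℝ)) :=
                Real.logb_le_logb_of_le one_lt_two hppos hle
            _ = Real.logb 2 (Nat.factorial c) + Real.logb 2 (N.choose c) := by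
                rw [Real.logb_mul (by positivity) hchoosepos.ne']
        have hcd : (c:ℝ) * (x - D) = (c:ℝ) * (x - 1) - Real.logb 2 (Nat.factorial c) := by
          rw [hD]; field_simp; ring
        have := mul_le_mul_of_nonneg_left hlog1 (le_of_lt hcR)
        linarith
      have f5 : (0:ℝ) < (c:ℝ) * (x - D) := mul_pos hcR (sub_pos.mpr hxD)
      have f6 : (0:ℝ) < Real.logb 2 (N.choose c) := lt_of_lt_of_le f5 f4
      have hxx : x / ((c:ℝ) * x) = 1/(c:ℝ) := by
        rw [mul_comm, ← div_div, div_self hx0.ne']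
      calc (1:ℝ)/(c:ℝ) = x / ((c:ℝ) * x) := hxx.symm
        _ ≤ (Nat.clog 2 N : ℝ) / Real.logb 2 (N.choose c) :=
            div_le_div₀ (le_trans (le_of_lt hx0) f1) f1 f6 f3
    · -- upper bound
      filter_upwards [eventually_ge_atTop (2*c + 2),
        hx.eventually (eventually_gt_atTop D),
        hx.eventually (eventually_gt_atTop (0:ℝ))] with N hN hxD hx0
      set x := Real.logb 2 (N:ℝ) with hxdef
      have hN2 : 2 ≤ N := by omega
      have hNR : (0:ℝ) < N := by positivity
      -- clog 2 N ≤ x + 1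
      have f2 : (Nat.clog 2 N : ℝ) ≤ x + 1 := by
        have hclog1 : 1 ≤ Nat.clog 2 N := Nat.clog_pos one_lt_two hN2
        have h := Nat.pow_pred_clog_lt_self one_lt_two (by omega : 1 < N)
        have h' : (2:ℝ) ^ (Nat.clog 2 N - 1) ≤ (N:ℝ) := by
          exact_mod_cast le_of_lt h
        have h2 : ((Nat.clog 2 N - 1 : ℕ) : ℝ) ≤ x := by
          calc ((Nat.clog 2 N - 1 : ℕ) : ℝ)
              = Real.logb 2 ((2:ℝ) ^ (Nat.clog 2 N - 1)) := by
                rw [Real.logb_pow, Real.logb_self_eq_one one_lt_two]; ring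
            _ ≤ x := Real.logb_le_logb_of_le one_lt_two (by positivity) h'
        rw [Nat.cast_sub hclog1] at h2
        push_cast at h2 ⊢
        linarith
      have f4 : (c:ℝ) * (x - D) ≤ Real.logb 2 (N.choose c) := by
        have hchoosepos : (0:ℝ) < (N.choose c : ℝ) := by
          exact_mod_cast Nat.choose_pos (by omega : c ≤ N)
        have hnat : (N + 1 - c)^c ≤ Nat.factorial c * N.choose c := by
          rw [← Nat.descFactorial_eq_factorial_mul_choose]
          exact Nat.pow_sub_le_descFactorial N c
        have hcast : (((N + 1 - c : ℕ)):ℝ) = (N:ℝ) + 1 - c := by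
          have : c ≤ N + 1 := by omega
          push_cast [Nat.cast_sub this]; ring
        have hhalf : (N:ℝ)/2 ≤ ((N + 1 - c : ℕ) : ℝ) := by
          rw [hcast]
          have : (2*c + 2 : ℝ) ≤ (N:ℝ) := by exact_mod_cast hN
          linarith
        have hhalfpos : (0:ℝ) < (N:ℝ)/2 := by positivity
        have hsubpos : (0:ℝ) < ((N + 1 - c : ℕ) : ℝ) := lt_of_lt_of_le hhalfpos hhalf
        have hlog1 : x - 1 ≤ Real.logb 2 ((N + 1 - c : ℕ) : ℝ) := by
          have h2 : Real.logb 2 ((N:ℝ)/2) = x - 1 := by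
            rw [Real.logb_div hNR.ne' (by norm_num),
              Real.logb_self_eq_one one_lt_two]
          rw [← h2]
          exact Real.logb_le_logb_of_le one_lt_two hhalfpos hhalf
        have hlog2 : (c:ℝ) * Real.logb 2 ((N + 1 - c : ℕ) : ℝ) ≤
            Real.logb 2 (Nat.factorial c) + Real.logb 2 (N.choose c) := by
          have hle : (((N + 1 - c : ℕ)):ℝ) ^ c ≤ (Nat.factorial c : ℝ) * (N.choose c : ℝ) := by
            exact_mod_cast hnat
          have hppos : (0:ℝ) < (((N + 1 - c : ℕ)):ℝ) ^ c := by positivity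
          calc (c:ℝ) * Real.logb 2 ((N + 1 - c : ℕ) : ℝ)
              = Real.logb 2 ((((N + 1 - c : ℕ)):ℝ) ^ c) := by rw [Real.logb_pow]
            _ ≤ Real.logb 2 ((Nat.factorial c : ℝ) * (N.choose c : ℝ)) :=
                Real.logb_le_logb_of_le one_lt_two hppos hle
            _ = Real.logb 2 (Nat.factorial c) + Real.logb 2 (N.choose c) := by
                rw [Real.logb_mul (by positivity) hchoosepos.ne']
        have hcd : (c:ℝ) * (x - D) = (c:ℝ) * (x - 1) - Real.logb 2 (Nat.factorial c) := by
          rw [hD]; field_simp; ring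
        have := mul_le_mul_of_nonneg_left hlog1 (le_of_lt hcR)
        linarith
      have f5 : (0:ℝ) < (c:ℝ) * (x - D) := mul_pos hcR (sub_pos.mpr hxD)
      exact div_le_div₀ (by linarith : (0:ℝ) ≤ x + 1) f2 f5 f4
  -- assemble
  have hcastS : ((u:ℝ)) * (c:ℝ) + ((s % u : ℕ) : ℝ) = (s:ℝ) := by
    exact_mod_cast Nat.div_add_mod s u
  have hS : (s:ℝ) - (c:ℝ) * ((u:ℝ) - 1) = ((s % u : ℕ) : ℝ) + (c:ℝ) := by linarith
  have hval : ((((s % u : ℕ) : ℝ) + (c:ℝ)) * a) * (1/(c:ℝ)) =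
      a * (1 + ((s % u : ℕ) : ℝ) / ((c:ℝ))) := by
    field_simp
    ring
  rw [← hval]
  refine (key.const_mul ((((s % u : ℕ) : ℝ) + (c:ℝ)) * a)).congr fun N => ?_
  rw [hS.symm]
  ring
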